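/- Let M = M1 ⊕ M2 where M1 is a fully invariant submodule of M. If M is H-supplemented, then both M1 and M2 are H-supplemented. -/

import Mathlib

universe u v

/-- `N` is a small (superfluous) submodule of `M`. -/
def SmallSub (R : Type v) [Ring R] {M : Type u} [AddCommGroup M] [Module R M]
    (N : Submodule R M) : Prop :=
  ∀ X : Submodule R M, N ⊔ X = ⊤ → X = ⊤

/-- `D` is a direct summand of `M`. -/
def IsDirectSummand (R : Type v) [Ring R] {M : Type u} [AddCommGroup M] [Module R M]
    (D : Submodule R M) : Prop :=
  ∃ D' : Submodule R M, IsCompl D D'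

/-- `M` is H-supplemented: for every submodule `X` there is a direct summand `D`
with `(X+D)/D ≪ M/D` and `(X+D)/X ≪ M/X`. -/
def HSupplemented (R : Type v) [Ring R] (M : Type u) [AddCommGroup M] [Module R M] : Prop :=
  ∀ X : Submodule R M, ∃ D : Submodule R M, IsDirectSummand R D ∧
    SmallSub R ((X ⊔ D).map D.mkQ) ∧ SmallSub R ((X ⊔ D).map X.mkQ)

/-- Condition (D3). -/
def CondD3 (R : Type v) [Ring R] (M : Type u) [AddCommGroup M] [Module R M] : Prop :=
  ∀ K L : Submodule R M, IsDirectSummand R K → IsDirectSummand R L → K ⊔ L = ⊤ →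
    IsDirectSummand R (K ⊓ L)

/-- `N` is a fully invariant submodule of `M`. -/
def FullyInvariant (R : Type v) [Ring R] {M : Type u} [AddCommGroup M] [Module R M]
    (N : Submodule R M) : Prop :=
  ∀ f : M →ₗ[R] M, N.map f ≤ N

section Aux

variable {R : Type v} [Ring R] {M : Type u} [AddCommGroup M] [Module R M]

lemma smallSub_sup_map_mkQ_iff (A B : Submodule R M) :
    SmallSub R ((A ⊔ B).map B.mkQ) ↔ ∀ Y : Submodule R M, B ≤ Y → A ⊔ Y = ⊤ → Y = ⊤ := by
  constructor
  · intro h Y hBY hAY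
    have h1 : (A ⊔ B).map B.mkQ ⊔ Y.map B.mkQ = ⊤ := by
      rw [← Submodule.map_sup]
      have : A ⊔ B ⊔ Y = ⊤ := by
        rw [sup_assoc, sup_eq_right.mpr hBY, hAY]
      rw [this, Submodule.map_top, Submodule.range_mkQ]
    have h2 := h _ h1
    have h3 : B ⊔ Y = ⊤ := by
      have := congrArg (Submodule.comap B.mkQ) h2
      rwa [Submodule.comap_map_mkQ, Submodule.comap_top] at this
    rwa [sup_eq_right.mpr hBY] at h3
  · intro h X' hsup
    set Y := X'.comap B.mkQ with hY
    have hBY : B ≤ Y := fun b hb => by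
      simp [hY, Submodule.mem_comap, (Submodule.Quotient.mk_eq_zero B).mpr hb]
    have hmapY : Y.map B.mkQ = X' := by
      rw [hY, Submodule.map_comap_eq, Submodule.range_mkQ, top_inf_eq]
    have hAY : A ⊔ Y = ⊤ := by
      have hm : (A ⊔ Y).map B.mkQ = ⊤ := by
        rw [Submodule.map_sup, hmapY]
        rw [Submodule.map_sup, Submodule.mkQ_map_self, sup_bot_eq] at hsup
        exact hsup
      have := (Submodule.map_mkQ_eq_top B (A ⊔ Y)).mp hm
      rw [← sup_assoc, sup_comm B A, sup_assoc, sup_eq_right.mpr hBY] at this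
      exact this
    rw [← hmapY, h Y hBY hAY, Submodule.map_top, Submodule.range_mkQ]

lemma hsupplemented_iff' :
    HSupplemented R M ↔ ∀ X : Submodule R M, ∃ D : Submodule R M, IsDirectSummand R D ∧
      (∀ Y : Submodule R M, D ≤ Y → X ⊔ Y = ⊤ → Y = ⊤) ∧
      (∀ Y : Submodule R M, X ≤ Y → D ⊔ Y = ⊤ → Y = ⊤) := by
  unfold HSupplemented
  refine forall_congr' fun X => exists_congr fun D => and_congr_right fun _ => ?_
  rw [smallSub_sup_map_mkQ_iff X D, sup_comm X D, smallSub_sup_map_mkQ_iff D X]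

/-- A projection pair attached to a complement. -/
lemma exists_proj {p q : Submodule R M} (h : IsCompl p q) :
    ∃ f : M →ₗ[R] M, (∀ m : M, f m ∈ p) ∧ (∀ m : M, m - f m ∈ q) := by
  refine ⟨p.subtype ∘ₗ Submodule.projectionOnto p q h,
    fun m => (Submodule.projectionOnto p q h m).2, fun m => ?_⟩
  obtain ⟨a, ha, b, hb, hab⟩ := Submodule.mem_sup.mp
    (show m ∈ p ⊔ q by rw [h.sup_eq_top]; trivial)
  have h1 : (p.subtype ∘ₗ Submodule.projectionOnto p q h) m = a := by
    rw [← hab]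
    simp [Submodule.projectionOnto_apply_left h ⟨a, ha⟩,
      Submodule.projectionOnto_apply_of_mem_right h hb]
  rw [h1, ← hab]
  simpa using hb

/-- Transfer H-supplementedness to a submodule. -/
lemma hsup_submodule (N : Submodule R M)
    (h : ∀ X : Submodule R M, X ≤ N → ∃ D E : Submodule R M, D ≤ N ∧ E ≤ N ∧
      D ⊓ E = ⊥ ∧ D ⊔ E = N ∧
      (∀ Y : Submodule R M, Y ≤ N → D ≤ Y → X ⊔ Y = N → Y = N) ∧
      (∀ Y : Submodule R M, Y ≤ N → X ≤ Y → D ⊔ Y = N → Y = N)) :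
    HSupplemented R ↥N := by
  rw [hsupplemented_iff']
  intro X'
  have hinj : Function.Injective (Submodule.map N.subtype) :=
    Submodule.map_injective_of_injective N.injective_subtype
  set X := X'.map N.subtype with hXdef
  have hXN : X ≤ N := Submodule.map_subtype_le N X'
  obtain ⟨D, E, hDN, hEN, hDE, hDEsup, ha, hb⟩ := h X hXN
  have hmc : ∀ P : Submodule R M, P ≤ N → (P.comap N.subtype).map N.subtype = P := by
    intro P hP
    rw [Submodule.map_comap_subtype, inf_eq_right.mpr hP]
  have hmaptop : (⊤ : Submodule R ↥N).map N.subtype = N := by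
    rw [Submodule.map_top, Submodule.range_subtype]
  have hmapeqN : ∀ Y' : Submodule R ↥N, Y'.map N.subtype = N → Y' = ⊤ := by
    intro Y' hY'
    apply hinj; rw [hY', hmaptop]
  refine ⟨D.comap N.subtype, ⟨E.comap N.subtype, ?_, ?_⟩, ?_, ?_⟩
  · rw [disjoint_iff, ← Submodule.comap_inf, hDE]
    rw [Submodule.comap_bot, Submodule.ker_subtype]
  · rw [codisjoint_iff]
    apply hinj
    rw [Submodule.map_sup, hmc D hDN, hmc E hEN, hDEsup, hmaptop]
  · intro Y' hDY' hXY'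
    apply hmapeqN
    refine ha (Y'.map N.subtype) (Submodule.map_subtype_le N Y') ?_ ?_
    · rw [← hmc D hDN]; exact Submodule.map_mono hDY'
    · rw [← Submodule.map_sup, hXY', hmaptop]
  · intro Y' hXY' hDY'
    apply hmapeqN
    refine hb (Y'.map N.subtype) (Submodule.map_subtype_le N Y') ?_ ?_
    · exact Submodule.map_mono hXY'
    · rw [← hmc D hDN, ← Submodule.map_sup, hDY', hmaptop]

end Aux

theorem stmt13 {R : Type v} [Ring R] {M : Type u} [AddCommGroup M] [Module R M]
    (M1 M2 : Submodule R M) (hcompl : IsCompl M1 M2)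
    (hfi : FullyInvariant R M1) (hH : HSupplemented R M) :
    HSupplemented R ↥M1 ∧ HSupplemented R ↥M2 := by
  obtain ⟨π, hπ1, hπ2⟩ := exists_proj hcompl
  have hM1M2 : M1 ⊓ M2 = ⊥ := hcompl.disjoint.eq_bot
  have hM1M2top : M1 ⊔ M2 = ⊤ := hcompl.codisjoint.eq_top
  constructor
  · -- M1 is H-supplemented
    apply hsup_submodule
    intro X hXM1
    obtain ⟨D, ⟨D', hDD'⟩, β1, β2⟩ := (hsupplemented_iff').mp hH X
    obtain ⟨p, hp1, hp2⟩ := exists_proj hDD'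
    have hDD'inf : D ⊓ D' = ⊥ := hDD'.disjoint.eq_bot
    have hfiD : ∀ m ∈ M1, p m ∈ M1 := fun m hm => hfi p ⟨m, hm, rfl⟩
    have hdec : ∀ m ∈ M1, p m ∈ M1 ⊓ D ∧ m - p m ∈ M1 ⊓ D' := fun m hm =>
      ⟨⟨hfiD m hm, hp1 m⟩, ⟨sub_mem hm (hfiD m hm), hp2 m⟩⟩
    have hM1dec : M1 = (M1 ⊓ D) ⊔ (M1 ⊓ D') := by
      apply le_antisymm
      · intro m hm
        obtain ⟨h1, h2⟩ := hdec m hm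
        have he : p m + (m - p m) = m := by abel
        exact he ▸ Submodule.add_mem_sup h1 h2
      · exact sup_le inf_le_left inf_le_left
    set C := D' ⊓ ((M1 ⊓ D) ⊔ M2) with hCdef
    have hD'le : D' ≤ (M1 ⊓ D') ⊔ C := by
      have hmod := sup_inf_assoc_of_le ((M1 ⊓ D) ⊔ M2)
        (inf_le_right : M1 ⊓ D' ≤ D')
      have htop : (M1 ⊓ D') ⊔ ((M1 ⊓ D) ⊔ M2) = ⊤ := by
        rw [← sup_assoc, sup_comm (M1 ⊓ D') (M1 ⊓ D), ← hM1dec, hM1M2top]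
      rw [htop, top_inf_eq] at hmod
      rw [hCdef, inf_comm D' ((M1 ⊓ D) ⊔ M2)]
      exact hmod.le
    have hCtop : M1 ⊔ (D ⊔ C) = ⊤ := by
      apply top_unique
      rw [← hDD'.codisjoint.eq_top]
      refine sup_le (le_sup_left.trans le_sup_right) (hD'le.trans (sup_le ?_ ?_))
      · exact inf_le_left.trans le_sup_left
      · exact le_sup_right.trans le_sup_right
    have hACbot : (M1 ⊓ D') ⊓ C = ⊥ := by
      rw [eq_bot_iff]
      intro x hx
      have hx1 : x ∈ M1 := hx.1.1
      have hxD' : x ∈ D' := hx.1.2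
      have hx2 : x ∈ (M1 ⊓ D) ⊔ M2 := (Submodule.mem_inf.mp hx.2).2
      obtain ⟨u, hu, m2, hm2, hum⟩ := Submodule.mem_sup.mp hx2
      have hxu : x - u ∈ M1 ⊓ M2 := by
        refine ⟨sub_mem hx1 hu.1, ?_⟩
        have : x - u = m2 := by rw [← hum]; abel
        rw [this]; exact hm2
      rw [hM1M2] at hxu
      have hxeq : x = u := sub_eq_zero.mp ((Submodule.mem_bot R).mp hxu)
      have : x ∈ D ⊓ D' := ⟨hxeq ▸ hu.2, hxD'⟩
      rw [hDD'inf] at this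
      exact this
    refine ⟨M1 ⊓ D, M1 ⊓ D', inf_le_left, inf_le_left, ?_, hM1dec.symm, ?_, ?_⟩
    · rw [eq_bot_iff, ← hDD'inf]
      exact le_inf (inf_le_left.trans inf_le_right) (inf_le_right.trans inf_le_right)
    · -- beta a
      intro Y hYN hDY hXY
      have hZ : Y ⊔ (D ⊔ C) = ⊤ := by
        refine β1 _ (le_sup_left.trans le_sup_right) ?_
        rw [← sup_assoc, hXY, hCtop]
      refine le_antisymm hYN ?_
      intro m hm
      have hmZ : m ∈ Y ⊔ (D ⊔ C) := by rw [hZ]; trivial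
      obtain ⟨y, hy, w, hw, hyw⟩ := Submodule.mem_sup.mp hmZ
      obtain ⟨d, hd, c, hc, hdc⟩ := Submodule.mem_sup.mp hw
      have hw'M1 : m - y ∈ M1 := sub_mem hm (hYN hy)
      obtain ⟨hu, hv⟩ := hdec (m - y) hw'M1
      have hweq : m - y = d + c := by rw [hdc, ← hyw]; abel
      have hvc : (m - y) - p (m - y) - c ∈ D ⊓ D' := by
        constructor
        · have : (m - y) - p (m - y) - c = d - p (m - y) := by rw [hweq]; abel
          rw [this]
          exact sub_mem hd hu.2
        · exact sub_mem hv.2 (Submodule.mem_inf.mp hc).1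
      rw [hDD'inf] at hvc
      have hvceq : (m - y) - p (m - y) = c :=
        sub_eq_zero.mp ((Submodule.mem_bot R).mp hvc)
      have hvbot : (m - y) - p (m - y) ∈ (M1 ⊓ D') ⊓ C := ⟨hv, hvceq ▸ hc⟩
      rw [hACbot] at hvbot
      have hv0 : (m - y) - p (m - y) = 0 := (Submodule.mem_bot R).mp hvbot
      have hwY : m - y ∈ Y := by
        have : m - y = p (m - y) := sub_eq_zero.mp hv0
        rw [this]
        exact hDY hu
      have : y + (m - y) = m := by abel
      exact this ▸ add_mem hy hwY
    · -- beta b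
      intro Y hYN hXY hDY
      have hZ : Y ⊔ M2 = ⊤ := by
        refine β2 _ (hXY.trans le_sup_left) ?_
        apply top_unique
        rw [← hM1M2top, ← hDY]
        refine sup_le (sup_le ?_ ?_) ?_
        · exact inf_le_right.trans le_sup_left
        · exact le_sup_left.trans le_sup_right
        · exact le_sup_right.trans le_sup_right
      have hmod := sup_inf_assoc_of_le M2 hYN
      rw [hZ, top_inf_eq, inf_comm M2 M1, hM1M2, sup_bot_eq] at hmod
      exact hmod.symm
  · -- M2 is H-supplemented
    apply hsup_submodule
    intro X hXM2
    obtain ⟨D, ⟨D', hDD'⟩, β1, β2⟩ := (hsupplemented_iff').mp hH X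
    obtain ⟨p, hp1, hp2⟩ := exists_proj hDD'
    have hDD'inf : D ⊓ D' = ⊥ := hDD'.disjoint.eq_bot
    have hfiD : ∀ m ∈ M1, p m ∈ M1 := fun m hm => hfi p ⟨m, hm, rfl⟩
    have hdec : ∀ m ∈ M1, p m ∈ M1 ⊓ D ∧ m - p m ∈ M1 ⊓ D' := fun m hm =>
      ⟨⟨hfiD m hm, hp1 m⟩, ⟨sub_mem hm (hfiD m hm), hp2 m⟩⟩
    have hM1dec : M1 = (M1 ⊓ D) ⊔ (M1 ⊓ D') := by
      apply le_antisymm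
      · intro m hm
        obtain ⟨h1, h2⟩ := hdec m hm
        have he : p m + (m - p m) = m := by abel
        exact he ▸ Submodule.add_mem_sup h1 h2
      · exact sup_le inf_le_left inf_le_left
    have hpfix : ∀ x ∈ D, p x = x := by
      intro x hx
      have h1 : x - p x ∈ D ⊓ D' := ⟨sub_mem hx (hp1 x), hp2 x⟩
      rw [hDD'inf] at h1
      exact (sub_eq_zero.mp ((Submodule.mem_bot R).mp h1)).symm
    have hpzero : ∀ x ∈ D', p x = 0 := by
      intro x hx
      have h1 : p x ∈ D ⊓ D' := by
        refine ⟨hp1 x, ?_⟩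
        have : p x = x - (x - p x) := by abel
        rw [this]
        exact sub_mem hx (hp2 x)
      rw [hDD'inf] at h1
      exact (Submodule.mem_bot R).mp h1
    set C := D' ⊓ ((M1 ⊓ D) ⊔ M2) with hCdef
    have hD'le : D' ≤ (M1 ⊓ D') ⊔ C := by
      have hmod := sup_inf_assoc_of_le ((M1 ⊓ D) ⊔ M2)
        (inf_le_right : M1 ⊓ D' ≤ D')
      have htop : (M1 ⊓ D') ⊔ ((M1 ⊓ D) ⊔ M2) = ⊤ := by
        rw [← sup_assoc, sup_comm (M1 ⊓ D') (M1 ⊓ D), ← hM1dec, hM1M2top]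
      rw [htop, top_inf_eq] at hmod
      rw [hCdef, inf_comm D' ((M1 ⊓ D) ⊔ M2)]
      exact hmod.le
    have hCtop : M1 ⊔ (D ⊔ C) = ⊤ := by
      apply top_unique
      rw [← hDD'.codisjoint.eq_top]
      refine sup_le (le_sup_left.trans le_sup_right) (hD'le.trans (sup_le ?_ ?_))
      · exact inf_le_left.trans le_sup_left
      · exact le_sup_right.trans le_sup_right
    refine ⟨M2 ⊓ (M1 ⊔ D), M2 ⊓ (M1 ⊔ C), inf_le_left, inf_le_left, ?_, ?_, ?_, ?_⟩
    · -- intersection is bot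
      rw [eq_bot_iff]
      intro x hx
      have hxM2 : x ∈ M2 := hx.1.1
      obtain ⟨m, hm, d, hd, hmd⟩ := Submodule.mem_sup.mp hx.1.2
      obtain ⟨m', hm', c, hc, hmc'⟩ := Submodule.mem_sup.mp hx.2.2
      have hpx1 : p x = p m + d := by
        rw [← hmd, map_add, hpfix d hd]
      have hpx2 : p x = p m' := by
        rw [← hmc', map_add, hpzero c (Submodule.mem_inf.mp hc).1, add_zero]
      have hdM1 : d ∈ M1 := by
        have : d = p m' - p m := by rw [← hpx2, hpx1]; abel
        rw [this]
        exact sub_mem (hfiD m' hm') (hfiD m hm)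
      have hxM1 : x ∈ M1 := by rw [← hmd]; exact add_mem hm hdM1
      have : x ∈ M1 ⊓ M2 := ⟨hxM1, hxM2⟩
      rw [hM1M2] at this
      exact this
    · -- sup is M2
      apply le_antisymm (sup_le inf_le_left inf_le_left)
      intro m2 hm2
      have hmtop : m2 ∈ M1 ⊔ (D ⊔ C) := by rw [hCtop]; trivial
      obtain ⟨m, hm, w, hw, hmw⟩ := Submodule.mem_sup.mp hmtop
      obtain ⟨d, hd, c, hc, hdc⟩ := Submodule.mem_sup.mp hw
      have hvE : c - π c ∈ M2 ⊓ (M1 ⊔ C) := by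
        refine ⟨hπ2 c, ?_⟩
        have : c - π c = -(π c) + c := by abel
        rw [this]
        exact Submodule.add_mem_sup (neg_mem (hπ1 c)) hc
      have huD : m2 - (c - π c) ∈ M2 ⊓ (M1 ⊔ D) := by
        refine ⟨sub_mem hm2 hvE.1, ?_⟩
        have : m2 - (c - π c) = (m + π c) + d := by
          rw [← hmw, ← hdc]; abel
        rw [this]
        exact Submodule.add_mem_sup (add_mem hm (hπ1 c)) hd
      have : (m2 - (c - π c)) + (c - π c) = m2 := by abel
      exact this ▸ Submodule.add_mem_sup huD hvE
    · -- beta a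
      intro Y hYM2 hDY hXY
      have hDle : D ≤ M1 ⊔ Y := by
        intro d hd
        have hdD2 : d - π d ∈ M2 ⊓ (M1 ⊔ D) := by
          refine ⟨hπ2 d, ?_⟩
          have : d - π d = -(π d) + d := by abel
          rw [this]
          exact Submodule.add_mem_sup (neg_mem (hπ1 d)) hd
        have : π d + (d - π d) = d := by abel
        exact this ▸ Submodule.add_mem_sup (hπ1 d) (hDY hdD2)
      have hZ : M1 ⊔ Y = ⊤ := by
        refine β1 _ hDle ?_
        rw [sup_left_comm, hXY, hM1M2top]
      have hmod := sup_inf_assoc_of_le M1 hYM2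
      rw [sup_comm Y M1, hZ, top_inf_eq, hM1M2, sup_bot_eq] at hmod
      exact hmod.symm
    · -- beta b
      intro Y hYM2 hXY hDY
      have hsup : D ⊔ (Y ⊔ (M1 ⊓ D')) = ⊤ := by
        apply top_unique
        rw [← hM1M2top]
        have hM1T : M1 ≤ D ⊔ (Y ⊔ (M1 ⊓ D')) := by
          refine le_trans hM1dec.le (sup_le ?_ ?_)
          · exact inf_le_right.trans le_sup_left
          · exact le_sup_right.trans le_sup_right
        refine sup_le hM1T ?_
        rw [← hDY]
        refine sup_le (inf_le_right.trans (sup_le hM1T le_sup_left)) ?_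
        exact le_sup_left.trans le_sup_right
      have hZ : Y ⊔ (M1 ⊓ D') = ⊤ := β2 _ (hXY.trans le_sup_left) hsup
      have hbot : (M1 ⊓ D') ⊓ M2 = ⊥ := by
        rw [eq_bot_iff, ← hM1M2]
        exact inf_le_inf_right M2 inf_le_left
      have hmod := sup_inf_assoc_of_le (M1 ⊓ D') hYM2
      rw [hZ, top_inf_eq, hbot, sup_bot_eq] at hmod
      exact hmod.symm
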